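/- Let α > 0, λ > 0, and let v be a C² function on [0,1] with v(0) = v(1) = 0 satisfying the expanded equation v''(1 - 2α|v|) - 2α (v/|v|) (v')² + λ v = 0 wherever v ≠ 0. If v attains a positive maximum at an interior point c with v(c) > 1/(2α) and v is C² near c, then a contradiction follows; hence ‖v‖_∞ ≤ 1/(2α). -/

import Mathlib

open Real Set

open Filter Topology

lemma aux_max (v : ℝ → ℝ) (hv : ContDiff ℝ 2 v) {a b c : ℝ} (hc : c ∈ Ioo a b)
    (hmax : IsMaxOn v (Icc a b) c) :
    deriv v c = 0 ∧ deriv (deriv v) c ≤ 0 := by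
  have hloc : IsLocalMax v c := hmax.isLocalMax (Icc_mem_nhds hc.1 hc.2)
  have hd1 : deriv v c = 0 := hloc.deriv_eq_zero
  refine ⟨hd1, ?_⟩
  by_contra h
  push_neg at h
  have hvd : Differentiable ℝ v ∧ ContDiff ℝ 1 (deriv v) := by
    have h2 : ContDiff ℝ (1+1) v := by exact_mod_cast hv
    have := (contDiff_succ_iff_deriv (n := 1)).1 h2
    exact ⟨this.1, this.2.2⟩
  have hg : HasDerivAt (deriv v) (deriv (deriv v) c) c :=
    (hvd.2.differentiable one_ne_zero c).hasDerivAt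
  rw [hasDerivAt_iff_tendsto_slope] at hg
  have hev : ∀ᶠ x in 𝓝[>] c, 0 < slope (deriv v) c x :=
    (hg.mono_left (nhdsWithin_mono _ (by intro x hx; exact ne_of_gt hx))).eventually
      (eventually_gt_nhds h)
  obtain ⟨u, hu, hsub⟩ := mem_nhdsGT_iff_exists_Ioo_subset.1 hev
  set b' := min b u with hb'
  have hcb' : c < b' := lt_min hc.2 hu
  have hpos : ∀ x ∈ Ioo c b', 0 < deriv v x := by
    intro x hx
    have hs := hsub ⟨hx.1, lt_of_lt_of_le hx.2 (min_le_right _ _)⟩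
    have hxc : 0 < x - c := sub_pos.2 hx.1
    have hdp : 0 < deriv v x / (x - c) := by
      simpa [slope_def_field, hd1] using hs
    have := mul_pos hdp hxc
    rwa [div_mul_cancel₀ _ (ne_of_gt hxc)] at this
  have hmono : StrictMonoOn v (Icc c b') := by
    apply strictMonoOn_of_deriv_pos (convex_Icc c b') hvd.1.continuous.continuousOn
    intro x hx
    rw [interior_Icc] at hx
    exact hpos x hx
  have hlt : v c < v b' := hmono ⟨le_rfl, le_of_lt hcb'⟩ ⟨le_of_lt hcb', le_rfl⟩ hcb'
  have : v b' ≤ v c := hmax ⟨le_trans (le_of_lt hc.1) (le_of_lt hcb'), min_le_left _ _⟩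
  linarith

lemma aux_min (v : ℝ → ℝ) (hv : ContDiff ℝ 2 v) {a b c : ℝ} (hc : c ∈ Ioo a b)
    (hmin : IsMinOn v (Icc a b) c) :
    deriv v c = 0 ∧ 0 ≤ deriv (deriv v) c := by
  have hneg : IsMaxOn (fun x => -v x) (Icc a b) c := by intro x hx; simp only [Set.mem_setOf_eq]; exact neg_le_neg (hmin hx)
  have hvn : ContDiff ℝ 2 (fun x => -v x) := hv.neg
  have hd1 : deriv (fun x => -v x) = fun x => -deriv v x := funext fun x => deriv.neg
  obtain ⟨h1, h2⟩ := aux_max _ hvn hc hneg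
  rw [hd1] at h1 h2
  have hd2 : deriv (fun x => -deriv v x) c = -deriv (deriv v) c := deriv.neg
  rw [hd2] at h2
  exact ⟨by simpa using h1, by linarith⟩

/-- For `α, λ > 0` and a `C²` function `v` on `[0,1]` with `v(0)=v(1)=0`
satisfying the expanded equation `v''(1-2α|v|) - 2α(v/|v|)(v')² + λv = 0` wherever
`v ≠ 0`, the sup norm of `v` is at most `1/(2α)` (an interior maximum with
`v(c) > 1/(2α)` would yield a contradiction). -/
 theorem stmt2 (α lam : ℝ) (hα : 0 < α) (hlam : 0 < lam) (v : ℝ → ℝ)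
    (hv : ContDiff ℝ 2 v) (hv0 : v 0 = 0) (hv1 : v 1 = 0)
    (heq : ∀ x ∈ Icc (0:ℝ) 1, v x ≠ 0 →
      deriv (deriv v) x * (1 - 2 * α * |v x|)
        - 2 * α * (v x / |v x|) * (deriv v x) ^ 2 + lam * v x = 0) :
    ∀ x ∈ Icc (0:ℝ) 1, |v x| ≤ 1 / (2 * α) := by
  have hne : (Icc (0:ℝ) 1).Nonempty := nonempty_Icc.2 (by norm_num)
  obtain ⟨c, hcmem, hcmax⟩ := isCompact_Icc.exists_isMaxOn hne hv.continuous.continuousOn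
  obtain ⟨d, hdmem, hdmin⟩ := isCompact_Icc.exists_isMinOn hne hv.continuous.continuousOn
  have h2α : 0 < 2 * α := by linarith
  have hbound : 0 < 1 / (2 * α) := by positivity
  -- upper bound on the max
  have hA : v c ≤ 1 / (2 * α) := by
    by_contra h
    push_neg at h
    have hvc : 0 < v c := lt_trans hbound h
    have hcint : c ∈ Ioo (0:ℝ) 1 := by
      refine ⟨lt_of_le_of_ne hcmem.1 ?_, lt_of_le_of_ne hcmem.2 ?_⟩
      · intro he; rw [← he, hv0] at hvc; exact lt_irrefl _ hvc
      · intro he; rw [he, hv1] at hvc; exact lt_irrefl _ hvc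
    obtain ⟨h1, h2⟩ := aux_max v hv hcint hcmax
    have habs : |v c| = v c := abs_of_pos hvc
    have := heq c hcmem (ne_of_gt hvc)
    rw [h1, habs] at this
    have h1m : 1 - 2 * α * v c < 0 := by
      rw [div_lt_iff₀ h2α] at h
      linarith
    nlinarith [mul_nonneg (neg_nonneg.2 h2) (neg_nonneg.2 (le_of_lt h1m)),
      mul_pos hlam hvc]
  -- lower bound on the min
  have hB : -(1 / (2 * α)) ≤ v d := by
    by_contra h
    push_neg at h
    have hvd : v d < 0 := lt_trans h (by linarith)
    have hdint : d ∈ Ioo (0:ℝ) 1 := by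
      refine ⟨lt_of_le_of_ne hdmem.1 ?_, lt_of_le_of_ne hdmem.2 ?_⟩
      · intro he; rw [← he, hv0] at hvd; exact lt_irrefl _ hvd
      · intro he; rw [he, hv1] at hvd; exact lt_irrefl _ hvd
    obtain ⟨h1, h2⟩ := aux_min v hv hdint hdmin
    have habs : |v d| = -v d := abs_of_neg hvd
    have := heq d hdmem (ne_of_lt hvd)
    rw [h1, habs] at this
    have h1m : 1 + 2 * α * v d < 0 := by
      have h3 : 2*α*v d < 2*α*(-(1/(2*α))) := mul_lt_mul_of_pos_left h h2α
      rw [mul_neg, mul_one_div, div_self (ne_of_gt h2α)] at h3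
      linarith
    nlinarith [mul_nonpos_of_nonneg_of_nonpos h2 (le_of_lt h1m),
      mul_neg_of_pos_of_neg hlam hvd]
  intro x hx
  rw [abs_le]
  exact ⟨le_trans hB (hdmin hx), le_trans (hcmax hx) hA⟩
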